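/- Let β > 0, d ≥ 1, and let c₁, …, c_d be positive real numbers. Define Φ : 𝔻^d → ℂ by Φ(z) = 1/2 + ∑_{j=1}^d c_j (1 − z_j), and let m̃_β^{⊗d} denote the d-fold product of the measure m̃_β on 𝔻^d. Then there exist constants c > 0 and ε₀ > 0 such that for every 0 < ε < ε₀, m̃_β^{⊗d}({z ∈ 𝔻^d : Φ(z) ∈ Q(0,ε)}) ≥ c · ε^{1/2 + d(1/2 + β)}. -/

import Mathlib

open MeasureTheory

/-- The probability measure on the open unit disc with density `β(1-|z|²)^{β-1}` with
respect to the area measure normalized so that the unit disc has measure 1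
(i.e. Lebesgue measure divided by `π`). -/
noncomputable def mB (β : ℝ) : Measure ℂ :=
  (volume.restrict {z : ℂ | ‖z‖ < 1}).withDensity
    (fun z => ENNReal.ofReal (β * (1 - ‖z‖ ^ 2) ^ (β - 1) / Real.pi))

/-- The Carleson square `Q(τ,ε)` in the half-plane `Re s > 1/2`. -/
def Qset (τ ε : ℝ) : Set ℂ :=
  {s : ℂ | 1/2 ≤ s.re ∧ s.re ≤ 1/2 + ε ∧ |s.im - τ| ≤ ε / 2}

instance mB.instSigmaFinite (β : ℝ) : SigmaFinite (mB β) :=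
  inferInstanceAs (SigmaFinite ((volume.restrict {z : ℂ | ‖z‖ < 1}).withDensity
    (fun z => ENNReal.ofReal (β * (1 - ‖z‖ ^ 2) ^ (β - 1) / Real.pi))))

lemma box_meas (x₁ x₂ y₁ y₂ : ℝ) :
    MeasurableSet {z : ℂ | x₁ ≤ z.re ∧ z.re ≤ x₂ ∧ y₁ ≤ z.im ∧ z.im ≤ y₂} := by
  refine (measurableSet_le measurable_const Complex.measurable_re).inter ?_
  refine (measurableSet_le Complex.measurable_re measurable_const).inter ?_
  exact (measurableSet_le measurable_const Complex.measurable_im).inter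
    (measurableSet_le Complex.measurable_im measurable_const)

lemma box_vol (x₁ x₂ y₁ y₂ : ℝ) :
    volume {z : ℂ | x₁ ≤ z.re ∧ z.re ≤ x₂ ∧ y₁ ≤ z.im ∧ z.im ≤ y₂}
      = ENNReal.ofReal (x₂ - x₁) * ENNReal.ofReal (y₂ - y₁) := by
  have h : {z : ℂ | x₁ ≤ z.re ∧ z.re ≤ x₂ ∧ y₁ ≤ z.im ∧ z.im ≤ y₂}
      = Complex.measurableEquivRealProd ⁻¹' (Set.Icc x₁ x₂ ×ˢ Set.Icc y₁ y₂) := by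
    ext z
    simp only [Set.mem_setOf_eq, Set.mem_preimage, Complex.measurableEquivRealProd_apply,
      Set.mem_prod, Set.mem_Icc]
    tauto
  rw [h, Complex.volume_preserving_equiv_real_prod.measure_preimage_equiv,
    Measure.volume_eq_prod, Measure.prod_prod, Real.volume_Icc, Real.volume_Icc]

lemma mB_box_lb (β : ℝ) (x₁ x₂ y₁ y₂ k : ℝ)
    (hbox : ∀ z : ℂ, x₁ ≤ z.re → z.re ≤ x₂ → y₁ ≤ z.im → z.im ≤ y₂ →
      ‖z‖ < 1 ∧ k ≤ β * (1 - ‖z‖ ^ 2) ^ (β - 1) / Real.pi) :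
    ENNReal.ofReal k * (ENNReal.ofReal (x₂ - x₁) * ENNReal.ofReal (y₂ - y₁))
      ≤ mB β {z : ℂ | x₁ ≤ z.re ∧ z.re ≤ x₂ ∧ y₁ ≤ z.im ∧ z.im ≤ y₂} := by
  set B := {z : ℂ | x₁ ≤ z.re ∧ z.re ≤ x₂ ∧ y₁ ≤ z.im ∧ z.im ≤ y₂} with hB
  have hBm : MeasurableSet B := box_meas _ _ _ _
  have hBsub : B ⊆ {z : ℂ | ‖z‖ < 1} := fun z hz =>
    (hbox z hz.1 hz.2.1 hz.2.2.1 hz.2.2.2).1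
  have hmeas : Measurable fun z : ℂ =>
      ENNReal.ofReal (β * (1 - ‖z‖ ^ 2) ^ (β - 1) / Real.pi) := by
    apply ENNReal.measurable_ofReal.comp
    exact (((measurable_const.sub (measurable_norm.pow_const 2)).pow
      measurable_const).const_mul β).div_const _
  calc ENNReal.ofReal k * (ENNReal.ofReal (x₂ - x₁) * ENNReal.ofReal (y₂ - y₁))
      = ENNReal.ofReal k * volume B := by rw [box_vol]
    _ = ∫⁻ _ in B, ENNReal.ofReal k ∂volume := (setLIntegral_const B _).symm
    _ ≤ ∫⁻ z in B, ENNReal.ofReal (β * (1 - ‖z‖ ^ 2) ^ (β - 1) / Real.pi) ∂volume :=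
        setLIntegral_mono hmeas fun z hz =>
          ENNReal.ofReal_le_ofReal (hbox z hz.1 hz.2.1 hz.2.2.1 hz.2.2.2).2
    _ = mB β B := by
        rw [mB, withDensity_apply _ hBm, Measure.restrict_restrict hBm,
          Set.inter_eq_self_of_subset_left hBsub]

lemma box_props (β r : ℝ) (hβ : 0 < β) (hr : 0 < r) (hr1 : 2 * r ≤ 1) (z : ℂ)
    (hx1 : 1 - 2 * r ≤ z.re) (hx2 : z.re ≤ 1 - r) (hy : z.im ^ 2 ≤ r / 2) :
    ‖z‖ < 1 ∧
      β * min ((r / 2) ^ (β - 1)) ((4 * r) ^ (β - 1)) / Real.pi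
        ≤ β * (1 - ‖z‖ ^ 2) ^ (β - 1) / Real.pi := by
  have hnz : ‖z‖ ^ 2 = z.re ^ 2 + z.im ^ 2 := by
    rw [Complex.sq_norm, Complex.normSq_apply]; ring
  have him : 0 ≤ z.im ^ 2 := sq_nonneg _
  have hlow : r / 2 ≤ 1 - ‖z‖ ^ 2 := by nlinarith
  have hhigh : 1 - ‖z‖ ^ 2 ≤ 4 * r := by nlinarith
  have hnorm : ‖z‖ < 1 := by nlinarith [norm_nonneg z, sq_nonneg (1 - ‖z‖)]
  refine ⟨hnorm, ?_⟩
  have hmin : min ((r / 2) ^ (β - 1)) ((4 * r) ^ (β - 1)) ≤ (1 - ‖z‖ ^ 2) ^ (β - 1) := by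
    rcases le_or_gt 1 β with h1 | h1
    · exact le_trans (min_le_left _ _) (Real.rpow_le_rpow (by positivity) hlow (by linarith))
    · exact le_trans (min_le_right _ _)
        (Real.rpow_le_rpow_of_nonpos (by linarith) hhigh (by linarith))
  have hπ := Real.pi_pos
  gcongr

lemma piFinSuccAbove_zero_apply (n : ℕ) (x : Fin (n+1) → ℂ) :
    (MeasurableEquiv.piFinSuccAbove (fun _ : Fin (n+1) => ℂ) 0) x
      = (x 0, fun j => x j.succ) := by
  simp [MeasurableEquiv.piFinSuccAbove, Fin.removeNth, Fin.zero_succAbove]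
  rfl

set_option maxHeartbeats 1000000 in
theorem stmt16 (β : ℝ) (hβ : 0 < β) (d : ℕ) (hd : 1 ≤ d) (c : Fin d → ℝ)
    (hc : ∀ j, 0 < c j) :
    ∃ c₀ ε₀ : ℝ, 0 < c₀ ∧ 0 < ε₀ ∧ ∀ ε : ℝ, 0 < ε → ε < ε₀ →
      ENNReal.ofReal (c₀ * ε ^ ((1 : ℝ) / 2 + d * (1/2 + β))) ≤
        Measure.pi (fun _ : Fin d => mB β)
          {z : Fin d → ℂ | (∀ j, ‖z j‖ < 1) ∧
            ((1/2 : ℂ) + ∑ j, (c j : ℂ) * (1 - z j)) ∈ Qset 0 ε} := by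
  obtain ⟨n, rfl⟩ : ∃ n, d = n + 1 := ⟨d - 1, by omega⟩
  have hπ := Real.pi_pos
  obtain ⟨M, hMdef⟩ : ∃ M : ℝ, M = 1 + ∑ j, c j := ⟨_, rfl⟩
  have hsum0 : 0 ≤ ∑ j, c j := Finset.sum_nonneg fun j _ => (hc j).le
  have hM1 : 1 ≤ M := by rw [hMdef]; linarith
  have hM0 : 0 < M := lt_of_lt_of_le one_pos hM1
  have hcM : ∀ j, c j ≤ M := by
    intro j
    have := Finset.single_le_sum (f := c) (fun i _ => (hc i).le) (Finset.mem_univ j)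
    rw [hMdef]; linarith
  have hsumM : ∑ j, c j = M - 1 := by rw [hMdef]; ring
  obtain ⟨D, hDdef⟩ : ∃ D : ℝ, D = (n : ℝ) + 1 := ⟨_, rfl⟩
  have hD1 : 1 ≤ D := by rw [hDdef]; have : (0:ℝ) ≤ n := Nat.cast_nonneg n; linarith
  have hD0 : 0 < D := lt_of_lt_of_le one_pos hD1
  have hDM1 : 1 ≤ D * M := by nlinarith only [hD1, hM1]
  have hc0 : 0 < c 0 := hc 0
  have hc0M : c 0 ≤ M := hcM 0
  obtain ⟨δ, hδdef⟩ : ∃ δ : ℝ, δ = c 0 / (8 * D * M ^ 2) := ⟨_, rfl⟩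
  have hδ0 : 0 < δ := by rw [hδdef]; positivity
  obtain ⟨κ₀, hκdef⟩ : ∃ κ₀ : ℝ, κ₀ = min ((1 / (8 * D * M)) ^ (β - 1)) ((1 / (D * M)) ^ (β - 1)) :=
    ⟨_, rfl⟩
  have hκ0 : 0 < κ₀ := by
    rw [hκdef]
    exact lt_min (Real.rpow_pos_of_pos (by positivity) _)
      (Real.rpow_pos_of_pos (by positivity) _)
  obtain ⟨A, hAdef⟩ : ∃ A : ℝ, A = β * κ₀ / Real.pi / (4 * D * M) := ⟨_, rfl⟩
  have hA0 : 0 < A := by rw [hAdef]; positivity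
  refine ⟨A / (4 * c 0) * (A * δ) ^ n, min 1 (c 0 ^ 2 / (4 * D ^ 2 * M ^ 2)),
    by positivity, lt_min one_pos (by positivity), ?_⟩
  intro ε hε hεlt
  have hε1 : ε < 1 := lt_of_lt_of_le hεlt (min_le_left _ _)
  have hε2 : ε < c 0 ^ 2 / (4 * D ^ 2 * M ^ 2) := lt_of_lt_of_le hεlt (min_le_right _ _)
  obtain ⟨s, hsdef⟩ : ∃ s : ℝ, s = Real.sqrt ε := ⟨_, rfl⟩
  have hs0 : 0 < s := hsdef ▸ Real.sqrt_pos.mpr hε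
  have hs2 : s ^ 2 = ε := by rw [hsdef]; exact Real.sq_sqrt hε.le
  have hsc : 2 * D * M * s ≤ c 0 := by
    have h1 : s ≤ Real.sqrt (c 0 ^ 2 / (4 * D ^ 2 * M ^ 2)) :=
      hsdef ▸ Real.sqrt_le_sqrt hε2.le
    have h2 : Real.sqrt (c 0 ^ 2 / (4 * D ^ 2 * M ^ 2)) = c 0 / (2 * D * M) := by
      rw [show c 0 ^ 2 / (4 * D ^ 2 * M ^ 2) = (c 0 / (2 * D * M)) ^ 2 from by
        rw [div_pow, show (2 * D * M) ^ 2 = 4 * D ^ 2 * M ^ 2 by ring]]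
      exact Real.sqrt_sq (by positivity)
    rw [h2] at h1
    calc 2 * D * M * s = s * (2 * D * M) := by ring
      _ ≤ c 0 := (le_div_iff₀ (by positivity)).mp h1
  obtain ⟨r, hrdef⟩ : ∃ r : ℝ, r = ε / (4 * D * M) := ⟨_, rfl⟩
  have hr0 : 0 < r := by rw [hrdef]; positivity
  have hrε : 4 * D * M * r = ε := by rw [hrdef]; field_simp
  have hr1 : 2 * r ≤ 1 := by
    have hprod2 : (0:ℝ) ≤ (4 * D * M - 2) * r := mul_nonneg (by linarith only [hDM1]) hr0.le
    nlinarith only [hprod2, hrε, hε1, hr0.le]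
  have hδε : 8 * D * M ^ 2 * δ = c 0 := by rw [hδdef]; field_simp
  have hδM : 8 * D * M * δ ≤ 1 := by
    refine le_of_mul_le_mul_left ?_ hM0
    rw [mul_one]; nlinarith only [hδε, hc0M]
  have hδ1 : δ ≤ 1 := by
    have h9 : 1 * (8 * δ) ≤ D * M * (8 * δ) := mul_le_mul_of_nonneg_right hDM1 (by positivity)
    nlinarith only [h9, hδM, hδ0.le]
  -- density lower bound constant
  obtain ⟨k, hkdef⟩ : ∃ k : ℝ, k = β * (ε ^ (β - 1) * κ₀) / Real.pi := ⟨_, rfl⟩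
  have hk0 : 0 < k := by
    rw [hkdef]
    have := Real.rpow_pos_of_pos hε (β - 1)
    positivity
  have hmin_eq : min ((r / 2) ^ (β - 1)) ((4 * r) ^ (β - 1)) = ε ^ (β - 1) * κ₀ := by
    have e1 : r / 2 = ε * (1 / (8 * D * M)) := by
      rw [hrdef, mul_one_div, div_div, div_eq_div_iff (by positivity) (by positivity)]; ring
    have e2 : 4 * r = ε * (1 / (D * M)) := by
      rw [hrdef, mul_one_div, mul_div_assoc', div_eq_div_iff (by positivity) (by positivity)]
      ring
    rw [e1, e2, Real.mul_rpow hε.le (by positivity), Real.mul_rpow hε.le (by positivity), hκdef]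
    exact (mul_min_of_nonneg _ _ (Real.rpow_nonneg hε.le _)).symm
  have hbox : ∀ z : ℂ, 1 - 2 * r ≤ z.re → z.re ≤ 1 - r → z.im ^ 2 ≤ r / 2 →
      ‖z‖ < 1 ∧ k ≤ β * (1 - ‖z‖ ^ 2) ^ (β - 1) / Real.pi := by
    intro z h1 h2 h3
    have h := box_props β r hβ hr0 hr1 z h1 h2 h3
    exact ⟨h.1, le_trans (le_of_eq (by rw [hkdef, hmin_eq])) h.2⟩
  have hkr : k * r = A * ε ^ β := by
    rw [hkdef, hAdef, hrdef,
      show ε ^ β = ε ^ (β - 1) * ε from by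
        rw [← Real.rpow_add_one hε.ne' (β - 1)]; ring_nf]
    field_simp
  -- the coordinate box and its measure lower bound
  set Bset : Set ℂ := {z : ℂ | 1 - 2*r ≤ z.re ∧ z.re ≤ 1 - r ∧ 0 ≤ z.im ∧ z.im ≤ δ * s}
    with hBsetdef
  have hδs2 : (δ * s) ^ 2 ≤ r / 2 := by
    have h8 : 8 * D * M * δ ^ 2 ≤ 1 := by
      have h8a : (8 * D * M * δ) * δ ≤ 1 * δ := mul_le_mul_of_nonneg_right hδM hδ0.le
      nlinarith only [h8a, hδ1]
    have key : 4 * D * M * (2 * (δ * s) ^ 2) ≤ 4 * D * M * (r / 2) * 2 := by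
      calc 4 * D * M * (2 * (δ * s) ^ 2) = (8 * D * M * δ ^ 2) * ε := by
            rw [← hs2]; ring
        _ ≤ 1 * ε := mul_le_mul_of_nonneg_right h8 hε.le
        _ = 4 * D * M * (r / 2) * 2 := by rw [← hrε]; ring
    refine le_of_mul_le_mul_left ?_ (show (0:ℝ) < 8 * D * M by positivity)
    nlinarith only [key]
  have hBj : ENNReal.ofReal k * (ENNReal.ofReal r * ENNReal.ofReal (δ * s))
      ≤ mB β Bset := by
    have h := mB_box_lb β (1 - 2*r) (1 - r) 0 (δ * s) k
      (fun z h1 h2 h3 h4 => hbox z h1 h2 (le_trans (pow_le_pow_left₀ h3 h4 2) hδs2))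
    rw [show (1 - r) - (1 - 2*r) = r by ring, sub_zero] at h
    exact h
  -- bound on the imaginary window of the first coordinate
  have hwin : ∀ S₀ : ℝ, 0 ≤ S₀ → S₀ ≤ M * (δ * s) → ∀ t : ℝ,
      (-S₀ - ε/4) / c 0 ≤ t → t ≤ -S₀ / c 0 → t ^ 2 ≤ r / 2 := by
    intro S₀ h0 hup t ht1 ht2
    have hA1 : -S₀ - ε/4 ≤ c 0 * t := by
      rw [div_le_iff₀ hc0] at ht1; linarith only [ht1]
    have hA2 : c 0 * t ≤ -S₀ := by
      rw [le_div_iff₀ hc0] at ht2; linarith only [ht2]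
    have q1 : (c 0 * t) ^ 2 ≤ (S₀ + ε/4) ^ 2 :=
      sq_le_sq' (by linarith only [hA1]) (by linarith only [hA2, h0, hε.le])
    have p1 : s * (2 * D * M * s) ≤ s * c 0 := mul_le_mul_of_nonneg_left hsc hs0.le
    have p2 : (4*D*M) * S₀ ≤ (4*D*M) * (M * (δ * s)) :=
      mul_le_mul_of_nonneg_left hup (by positivity)
    have p3 : (4*D*M) * (M * (δ * s)) = c 0 * s / 2 := by rw [← hδε]; ring
    have p1' : 2*D*M*ε ≤ s * c 0 := by rw [← hs2]; linarith only [p1]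
    have hS4 : (4*D*M) * (S₀ + ε/4) ≤ c 0 * s := by linarith only [p1', p2, p3]
    have q2 : ((4*D*M) * (S₀ + ε/4)) ^ 2 ≤ (c 0 * s) ^ 2 :=
      pow_le_pow_left₀ (by positivity) hS4 2
    have pos : (0:ℝ) < 16 * D^2 * M^2 * c 0 ^ 2 := by positivity
    refine le_of_mul_le_mul_left ?_ pos
    have hX : (0:ℝ) ≤ 4*D*M*(c 0 ^ 2 * r) := by positivity
    have last : 1 * (4*D*M*(c 0 ^ 2 * r)) ≤ (D*M) * (4*D*M*(c 0 ^ 2 * r)) :=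
      mul_le_mul_of_nonneg_right hDM1 hX
    have hDMr : (0:ℝ) ≤ D^2 * M^2 * (c 0 ^ 2 * r) := by positivity
    calc 16 * D^2 * M^2 * c 0 ^ 2 * t ^ 2
        = 16 * D^2 * M^2 * (c 0 * t) ^ 2 := by ring
      _ ≤ 16 * D^2 * M^2 * (S₀ + ε/4) ^ 2 := by
          exact mul_le_mul_of_nonneg_left q1 (by positivity)
      _ = ((4*D*M) * (S₀ + ε/4)) ^ 2 := by ring
      _ ≤ (c 0 * s) ^ 2 := q2
      _ = c 0 ^ 2 * ε := by rw [← hs2]; ring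
      _ = 1 * (4*D*M*(c 0 ^ 2 * r)) := by rw [← hrε]; ring
      _ ≤ (D*M) * (4*D*M*(c 0 ^ 2 * r)) := last
      _ ≤ 16 * D^2 * M^2 * c 0 ^ 2 * (r / 2) := by nlinarith only [hDMr]
  -- the sum functional
  obtain ⟨Sf, hSfdef⟩ : ∃ Sf : (Fin n → ℂ) → ℝ,
      Sf = fun y => ∑ j : Fin n, c j.succ * (y j).im := ⟨_, rfl⟩
  have hSfm : Measurable Sf := by
    rw [hSfdef]
    apply Finset.measurable_sum
    intro j _
    exact (Complex.measurable_im.comp (measurable_pi_apply j)).const_mul _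
  have hSfbound : ∀ y : Fin n → ℂ, (∀ j, y j ∈ Bset) → 0 ≤ Sf y ∧ Sf y ≤ M * (δ * s) := by
    intro y hy
    have hterm : ∀ j : Fin n, 0 ≤ c j.succ * (y j).im ∧
        c j.succ * (y j).im ≤ c j.succ * (δ * s) := by
      intro j
      obtain ⟨-, -, h3, h4⟩ := hy j
      exact ⟨mul_nonneg (hc _).le h3, mul_le_mul_of_nonneg_left h4 (hc _).le⟩
    have hcsum : ∑ j : Fin n, c j.succ ≤ M := by
      have h := Fin.sum_univ_succ c
      rw [hsumM] at h
      linarith only [h, hc0, hM1, hsum0]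
    constructor
    · rw [hSfdef]
      exact Finset.sum_nonneg fun j _ => (hterm j).1
    · rw [hSfdef]
      calc ∑ j : Fin n, c j.succ * (y j).im
          ≤ ∑ j : Fin n, c j.succ * (δ * s) := Finset.sum_le_sum fun j _ => (hterm j).2
        _ = (∑ j : Fin n, c j.succ) * (δ * s) := by rw [Finset.sum_mul]
        _ ≤ M * (δ * s) := mul_le_mul_of_nonneg_right hcsum (by positivity)
  -- the window set and the product set
  obtain ⟨Bw, hBwdef⟩ : ∃ Bw : ℝ → Set ℂ, Bw = fun S₀ => {w : ℂ | 1 - 2*r ≤ w.re ∧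
      w.re ≤ 1 - r ∧ (-S₀ - ε/4) / c 0 ≤ w.im ∧ w.im ≤ -S₀ / c 0} := ⟨_, rfl⟩
  obtain ⟨T, hTdef⟩ : ∃ T : Set (ℂ × (Fin n → ℂ)),
      T = {p : ℂ × (Fin n → ℂ) | p.1 ∈ Bw (Sf p.2)} ∩ {p | ∀ j, p.2 j ∈ Bset} := ⟨_, rfl⟩
  have hT : MeasurableSet T := by
    rw [hTdef, hBwdef]
    apply MeasurableSet.inter
    · have h1 : Measurable fun p : ℂ × (Fin n → ℂ) => p.1.re :=
        Complex.measurable_re.comp measurable_fst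
      have h2 : Measurable fun p : ℂ × (Fin n → ℂ) => p.1.im :=
        Complex.measurable_im.comp measurable_fst
      have h3 : Measurable fun p : ℂ × (Fin n → ℂ) => Sf p.2 := hSfm.comp measurable_snd
      exact (measurableSet_le measurable_const h1).inter
        ((measurableSet_le h1 measurable_const).inter
          ((measurableSet_le ((h3.neg.sub_const (ε/4)).div_const (c 0)) h2).inter
            (measurableSet_le h2 (h3.neg.div_const (c 0)))))
    · rw [Set.setOf_forall]
      exact MeasurableSet.iInter fun j =>
        (box_meas _ _ _ _).preimage ((measurable_pi_apply j).comp measurable_snd)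
  -- slice lower bound
  have hslice : ∀ y : Fin n → ℂ, y ∈ Set.pi Set.univ (fun _ : Fin n => Bset) →
      ENNReal.ofReal k * (ENNReal.ofReal r * ENNReal.ofReal (ε / (4 * c 0)))
        ≤ mB β ((fun w => (w, y)) ⁻¹' T) := by
    intro y hy
    have hy' : ∀ j, y j ∈ Bset := fun j => hy j (Set.mem_univ j)
    obtain ⟨hS0, hS1⟩ := hSfbound y hy'
    have hsub : Bw (Sf y) ⊆ (fun w => (w, y)) ⁻¹' T := by
      intro w hw
      rw [Set.mem_preimage, hTdef]
      exact ⟨hw, hy'⟩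
    refine le_trans ?_ (measure_mono hsub)
    have h := mB_box_lb β (1 - 2*r) (1 - r) ((-(Sf y) - ε/4) / c 0) (-(Sf y) / c 0) k
      (fun z h1 h2 h3 h4 => hbox z h1 h2 (hwin (Sf y) hS0 hS1 z.im h3 h4))
    rw [show (1 - r) - (1 - 2*r) = r from by ring,
      show -(Sf y) / c 0 - (-(Sf y) - ε/4) / c 0 = ε / (4 * c 0) from by
        rw [div_sub_div_same, show -(Sf y) - (-(Sf y) - ε/4) = ε/4 by ring, div_div]] at h
    rw [hBwdef]
    exact h
  -- the preimage of T is contained in the target set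
  have hmain_sub : (MeasurableEquiv.piFinSuccAbove (fun _ : Fin (n+1) => ℂ) 0) ⁻¹' T ⊆
      {z : Fin (n+1) → ℂ | (∀ j, ‖z j‖ < 1) ∧
        ((1/2 : ℂ) + ∑ j, (c j : ℂ) * (1 - z j)) ∈ Qset 0 ε} := by
    intro x hx
    rw [Set.mem_preimage, piFinSuccAbove_zero_apply, hTdef] at hx
    obtain ⟨hx0, hxs⟩ := hx
    have hxs' : ∀ j : Fin n, x j.succ ∈ Bset := hxs
    obtain ⟨hS0, hS1⟩ := hSfbound _ hxs'
    rw [hBwdef] at hx0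
    obtain ⟨h01, h02, h03, h04⟩ := hx0
    have hcoords : ∀ j : Fin (n+1),
        1 - 2*r ≤ (x j).re ∧ (x j).re ≤ 1 - r ∧ (x j).im ^ 2 ≤ r/2 := by
      intro j
      induction j using Fin.cases with
      | zero => exact ⟨h01, h02, hwin _ hS0 hS1 _ h03 h04⟩
      | succ j =>
        obtain ⟨h1, h2, h3, h4⟩ := hxs' j
        exact ⟨h1, h2, le_trans (pow_le_pow_left₀ h3 h4 2) hδs2⟩
    refine ⟨fun j => (hbox (x j) (hcoords j).1 (hcoords j).2.1 (hcoords j).2.2).1, ?_⟩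
    have hre : ((1/2 : ℂ) + ∑ j, (c j : ℂ) * (1 - x j)).re
        = 1/2 + ∑ j, c j * (1 - (x j).re) := by
      simp [Complex.add_re, Complex.re_sum, Complex.mul_re, Complex.sub_re, Complex.sub_im,
        Complex.one_re, Complex.one_im, Complex.ofReal_re, Complex.ofReal_im]
    have him : ((1/2 : ℂ) + ∑ j, (c j : ℂ) * (1 - x j)).im
        = -∑ j, c j * (x j).im := by
      simp [Complex.add_im, Complex.im_sum, Complex.mul_im, Complex.sub_re, Complex.sub_im,
        Complex.one_re, Complex.one_im, Complex.ofReal_re, Complex.ofReal_im, mul_neg,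
        Finset.sum_neg_distrib]
    have hterm_lb : ∀ j, 0 ≤ c j * (1 - (x j).re) := fun j =>
      mul_nonneg (hc j).le (by linarith only [(hcoords j).2.1, hr0])
    have hterm_ub : ∀ j, c j * (1 - (x j).re) ≤ c j * (2*r) := fun j =>
      mul_le_mul_of_nonneg_left (by linarith only [(hcoords j).1]) (hc j).le
    have hsum_lb : 0 ≤ ∑ j, c j * (1 - (x j).re) :=
      Finset.sum_nonneg fun j _ => hterm_lb j
    have hsum_ub : ∑ j, c j * (1 - (x j).re) ≤ ε := by
      have hprod : (0:ℝ) ≤ (2*D - 1) * M * r :=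
        mul_nonneg (mul_nonneg (by linarith only [hD1]) hM0.le) hr0.le
      calc ∑ j, c j * (1 - (x j).re) ≤ ∑ j : Fin (n+1), c j * (2*r) :=
            Finset.sum_le_sum fun j _ => hterm_ub j
        _ = (∑ j, c j) * (2*r) := by rw [← Finset.sum_mul]
        _ = (M - 1) * (2*r) := by rw [hsumM]
        _ ≤ ε := by nlinarith only [hprod, hr0.le, hrε]
    have hsplit : ∑ j : Fin (n+1), c j * (x j).im
        = c 0 * (x 0).im + Sf (fun j => x j.succ) := by
      rw [Fin.sum_univ_succ, hSfdef]
    have hA1 : -(Sf fun j => x j.succ) - ε/4 ≤ c 0 * (x 0).im := by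
      rw [div_le_iff₀ hc0] at h03; linarith only [h03]
    have hA2 : c 0 * (x 0).im ≤ -(Sf fun j => x j.succ) := by
      rw [le_div_iff₀ hc0] at h04; linarith only [h04]
    refine ⟨by rw [hre]; linarith only [hsum_lb], by rw [hre]; linarith only [hsum_ub], ?_⟩
    rw [him, sub_zero, abs_neg, hsplit]
    rw [abs_le]
    constructor <;> linarith only [hS0, hA1, hA2, hε.le]
  -- the scalar identity
  have hscalar : ε ^ ((1:ℝ)/2 + (↑(n+1) : ℝ) * (1/2 + β))
      = ε ^ β * ε * (ε ^ β * ε ^ ((1:ℝ)/2)) ^ n := by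
    rw [show ε ^ β * ε ^ ((1:ℝ)/2) = ε ^ (β + 1/2) from (Real.rpow_add hε _ _).symm,
      ← Real.rpow_natCast (ε ^ (β + 1/2)) n, ← Real.rpow_mul hε.le,
      show ε ^ β * ε = ε ^ (β + 1) from by rw [Real.rpow_add_one hε.ne'],
      ← Real.rpow_add hε]
    congr 1; push_cast; ring
  have hident : (A / (4 * c 0) * (A * δ) ^ n) * ε ^ ((1:ℝ)/2 + (↑(n+1) : ℝ) * (1/2 + β))
      = k * (r * (ε / (4 * c 0))) * (k * (r * (δ * s))) ^ n := by
    have h1 : k * (r * (ε / (4 * c 0))) = A * ε ^ β * ε * (1/(4 * c 0)) := by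
      rw [show k * (r * (ε / (4 * c 0))) = k * r * ε * (1/(4*c 0)) from by ring, hkr]
    have h2 : k * (r * (δ * s)) = A * ε ^ β * (δ * s) := by
      rw [show k * (r * (δ * s)) = k * r * (δ * s) from by ring, hkr]
    rw [h1, h2, hsdef, Real.sqrt_eq_rpow, hscalar]
    ring
  -- the main measure estimate
  have hP : MeasurableSet (Set.pi Set.univ fun _ : Fin n => Bset) :=
    MeasurableSet.univ_pi fun _ => box_meas _ _ _ _
  calc ENNReal.ofReal (A / (4 * c 0) * (A * δ) ^ n * ε ^ ((1:ℝ)/2 + (↑(n+1) : ℝ) * (1/2 + β)))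
      = ENNReal.ofReal (k * (r * (ε / (4 * c 0))) * (k * (r * (δ * s))) ^ n) := by
        rw [hident]
    _ = (ENNReal.ofReal k * (ENNReal.ofReal r * ENNReal.ofReal (ε / (4 * c 0)))) *
        (ENNReal.ofReal k * (ENNReal.ofReal r * ENNReal.ofReal (δ * s))) ^ n := by
        rw [ENNReal.ofReal_mul (mul_nonneg hk0.le (mul_nonneg hr0.le (by positivity))),
          ENNReal.ofReal_pow (mul_nonneg hk0.le (mul_nonneg hr0.le (by positivity))),
          ENNReal.ofReal_mul hk0.le, ENNReal.ofReal_mul hr0.le,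
          ENNReal.ofReal_mul hk0.le, ENNReal.ofReal_mul hr0.le]
    _ ≤ (ENNReal.ofReal k * (ENNReal.ofReal r * ENNReal.ofReal (ε / (4 * c 0)))) *
        Measure.pi (fun _ : Fin n => mB β) (Set.pi Set.univ fun _ => Bset) := by
        apply mul_le_mul_right
        rw [Measure.pi_pi]
        calc (ENNReal.ofReal k * (ENNReal.ofReal r * ENNReal.ofReal (δ * s))) ^ n
            = ∏ _j : Fin n, (ENNReal.ofReal k * (ENNReal.ofReal r * ENNReal.ofReal (δ * s))) := by
              rw [Finset.prod_const, Finset.card_univ, Fintype.card_fin]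
          _ ≤ ∏ _j : Fin n, mB β Bset := Finset.prod_le_prod' fun j _ => hBj
    _ = ∫⁻ _y in (Set.pi Set.univ fun _ : Fin n => Bset),
          ENNReal.ofReal k * (ENNReal.ofReal r * ENNReal.ofReal (ε / (4 * c 0)))
          ∂(Measure.pi fun _ : Fin n => mB β) := (setLIntegral_const _ _).symm
    _ = ∫⁻ y, (Set.pi Set.univ fun _ : Fin n => Bset).indicator
          (fun _ => ENNReal.ofReal k * (ENNReal.ofReal r * ENNReal.ofReal (ε / (4 * c 0)))) y
          ∂(Measure.pi fun _ : Fin n => mB β) := (lintegral_indicator hP _).symm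
    _ ≤ ∫⁻ y, mB β ((fun w => (w, y)) ⁻¹' T) ∂(Measure.pi fun _ : Fin n => mB β) := by
        apply lintegral_mono
        intro y
        by_cases hy : y ∈ Set.pi Set.univ fun _ : Fin n => Bset
        · rw [Set.indicator_of_mem hy]; exact hslice y hy
        · rw [Set.indicator_of_notMem hy]; exact zero_le
    _ = ((mB β).prod (Measure.pi fun _ : Fin n => mB β)) T := (Measure.prod_apply_symm hT).symm
    _ = Measure.pi (fun _ : Fin (n+1) => mB β)
          ((MeasurableEquiv.piFinSuccAbove (fun _ : Fin (n+1) => ℂ) 0) ⁻¹' T) :=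
        ((measurePreserving_piFinSuccAbove (fun _ : Fin (n+1) => mB β) 0).measure_preimage_equiv
          T).symm
    _ ≤ Measure.pi (fun _ : Fin (n+1) => mB β)
          {z : Fin (n+1) → ℂ | (∀ j, ‖z j‖ < 1) ∧
            ((1/2 : ℂ) + ∑ j, (c j : ℂ) * (1 - z j)) ∈ Qset 0 ε} :=
        measure_mono hmain_sub
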